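/- Let d ≥ 2 be an integer and let A = E_{s∼p_Sh}[s s^⊤] ∈ ℝ^{d×d} be the second-moment matrix of the Shapley kernel distribution. Then the minimum eigenvalue of the symmetric matrix A equals 1/(2·H_{d−1}); equivalently, φ^⊤ A φ ≥ ‖φ‖₂²/(2·H_{d−1}) for all φ ∈ ℝ^d, and equality holds for some nonzero φ ∈ ℝ^d. -/

import Mathlib

open scoped BigOperators

/-- The `n`-th harmonic number `H_n = ∑_{k=1}^n 1/k`. -/
noncomputable def harm (n : ℕ) : ℝ := ∑ k ∈ Finset.Icc 1 n, (1 : ℝ) / k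

/-- Normalizing constant `Q = ∑_{k=1}^{d-1} (d-1)/(k(d-k))` of the Shapley kernel. -/
noncomputable def shapQ (d : ℕ) : ℝ :=
  ∑ k ∈ Finset.Icc 1 (d - 1), ((d : ℝ) - 1) / ((k : ℝ) * ((d : ℝ) - (k : ℝ)))

/-- Shapley kernel distribution on subsets `s ⊆ {1,…,d}`. -/
noncomputable def pSh (d : ℕ) (s : Finset (Fin d)) : ℝ :=
  if 0 < s.card ∧ s.card < d then
    (((d : ℝ) - 1) /
      ((Nat.choose d s.card : ℝ) * (s.card : ℝ) * ((d : ℝ) - (s.card : ℝ)))) / shapQ d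
  else 0

/-- Second-moment matrix `A = E_{s∼p_Sh}[s sᵀ]`, i.e. `A_{ij} = ∑_s p_Sh(s) s_i s_j`. -/
noncomputable def secondMoment (d : ℕ) : Matrix (Fin d) (Fin d) ℝ :=
  fun i j => ∑ s : Finset (Fin d),
    pSh d s * (if i ∈ s then (1 : ℝ) else 0) * (if j ∈ s then (1 : ℝ) else 0)

lemma one_le_harm {n : ℕ} (hn : 1 ≤ n) : 1 ≤ harm n := by
  have := Finset.single_le_sum (f := fun k : ℕ => (1:ℝ)/k)
    (fun k _ => by positivity) (by simp [Finset.mem_Icc, hn] : 1 ∈ Finset.Icc 1 n)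
  simpa [harm] using this

lemma harm_pos {n : ℕ} (hn : 1 ≤ n) : 0 < harm n := lt_of_lt_of_le one_pos (one_le_harm hn)

lemma sum_reflect {d : ℕ} (hd : 1 ≤ d) :
    ∑ k ∈ Finset.Icc 1 (d-1), (1:ℝ) / ((d:ℝ) - k) = harm (d-1) := by
  rw [harm]
  apply Finset.sum_nbij' (i := fun k => d - k) (j := fun k => d - k)
  · intro a ha; simp only [Finset.mem_Icc] at ha ⊢; omega
  · intro a ha; simp only [Finset.mem_Icc] at ha ⊢; omega
  · intro a ha; simp only [Finset.mem_Icc] at ha; omega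
  · intro a ha; simp only [Finset.mem_Icc] at ha; omega
  · intro a ha
    simp only [Finset.mem_Icc] at ha
    have : ((d - a : ℕ) : ℝ) = (d:ℝ) - a := by
      have : a ≤ d := by omega
      push_cast [this]; ring
    rw [this]

lemma shapQ_eq {d : ℕ} (hd : 2 ≤ d) :
    shapQ d = 2 * ((d:ℝ) - 1) / d * harm (d-1) := by
  have hd0 : (d:ℝ) ≠ 0 := by positivity
  have : shapQ d = ∑ k ∈ Finset.Icc 1 (d-1),
      (((d:ℝ)-1)/d) * ((1:ℝ)/k + (1:ℝ)/((d:ℝ)-k)) := by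
    apply Finset.sum_congr rfl
    intro k hk
    simp only [Finset.mem_Icc] at hk
    have hk0 : (k:ℝ) ≠ 0 := by
      have : 0 < k := hk.1; positivity
    have hdk : (d:ℝ) - k ≠ 0 := by
      have : k < d := by omega
      have : (k:ℝ) < d := by exact_mod_cast this
      linarith
    field_simp
    try ring
  rw [this, ← Finset.mul_sum, Finset.sum_add_distrib, sum_reflect (by omega), ← harm]
  ring

lemma shapQ_pos {d : ℕ} (hd : 2 ≤ d) : 0 < shapQ d := by
  rw [shapQ_eq hd]
  have h1 : (1:ℝ) ≤ (d:ℝ) - 1 := by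
    have : (2:ℝ) ≤ d := by exact_mod_cast hd
    linarith
  have := harm_pos (n := d-1) (by omega)
  have hd0 : (0:ℝ) < d := by positivity
  positivity
open Finset in
lemma aux_count1 {d : ℕ} (a : Fin d) (k : ℕ) (hk : 1 ≤ k) :
    ((Finset.powersetCard k (univ : Finset (Fin d))).filter (fun s => a ∈ s)).card
      = (d-1).choose (k-1) := by
  have : ((Finset.powersetCard k (univ : Finset (Fin d))).filter (fun s => a ∈ s)).card
      = (Finset.powersetCard (k-1) (univ.erase a)).card := by
    apply Finset.card_bij (fun s _ => s.erase a)
    · intro s hs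
      simp only [mem_filter, mem_powersetCard] at hs
      rw [mem_powersetCard]
      exact ⟨fun x hx => by simp [Finset.mem_erase.mp hx |>.1, (Finset.mem_erase.mp hx).1],
        by rw [card_erase_of_mem hs.2, hs.1.2]⟩
    · intro s hs t ht h
      simp only [mem_filter] at hs ht
      rw [← insert_erase hs.2, ← insert_erase ht.2, h]
    · intro t ht
      rw [mem_powersetCard] at ht
      refine ⟨insert a t, ?_, ?_⟩
      · simp only [mem_filter, mem_powersetCard]
        have ha : a ∉ t := fun h => (Finset.mem_erase.mp (ht.1 h)).1 rfl
        refine ⟨⟨fun x _ => mem_univ x, ?_⟩, mem_insert_self a t⟩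
        rw [card_insert_of_notMem ha, ht.2]; omega
      · rw [Finset.erase_insert]
        exact fun h => (Finset.mem_erase.mp (ht.1 h)).1 rfl
  rw [this, Finset.card_powersetCard, card_erase_of_mem (mem_univ a), card_univ,
    Fintype.card_fin]

open Finset in
lemma aux_count2 {d : ℕ} {i j : Fin d} (hij : i ≠ j) (k : ℕ) (hk : 2 ≤ k) :
    ((Finset.powersetCard k (univ : Finset (Fin d))).filter (fun s => i ∈ s ∧ j ∈ s)).card
      = (d-2).choose (k-2) := by
  have : ((Finset.powersetCard k (univ : Finset (Fin d))).filter
        (fun s => i ∈ s ∧ j ∈ s)).card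
      = (Finset.powersetCard (k-2) ((univ.erase i).erase j)).card := by
    apply Finset.card_bij (fun s _ => (s.erase i).erase j)
    · intro s hs
      simp only [mem_filter, mem_powersetCard] at hs
      rw [mem_powersetCard]
      constructor
      · intro x hx
        simp only [mem_erase] at hx ⊢
        exact ⟨hx.1, hx.2.1, mem_univ x⟩
      · rw [card_erase_of_mem (by simp [mem_erase, Ne.symm hij, hs.2.2]),
          card_erase_of_mem hs.2.1, hs.1.2]
        omega
    · intro s hs t ht h
      simp only [mem_filter] at hs ht
      have h2 : insert i (insert j ((s.erase i).erase j))
          = insert i (insert j ((t.erase i).erase j)) := by rw [h]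
      rwa [insert_erase (by simp [mem_erase, Ne.symm hij, hs.2.2]), insert_erase hs.2.1,
        insert_erase (by simp [mem_erase, Ne.symm hij, ht.2.2]), insert_erase ht.2.1] at h2
    · intro t ht
      rw [mem_powersetCard] at ht
      have hit : i ∉ t := fun h => by
        have := ht.1 h; simp [mem_erase] at this
      have hjt : j ∉ t := fun h => by
        have := ht.1 h; simp [mem_erase] at this
      refine ⟨insert i (insert j t), ?_, ?_⟩
      · simp only [mem_filter, mem_powersetCard]
        refine ⟨⟨fun x _ => mem_univ x, ?_⟩, by simp, by simp⟩
        rw [card_insert_of_notMem (by simp [hij, hit]), card_insert_of_notMem hjt, ht.2]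
        omega
      · rw [Finset.erase_insert (by simp [hij, hit]), Finset.erase_insert hjt]
  rw [this, Finset.card_powersetCard, card_erase_of_mem (by simp [Ne.symm hij]),
    card_erase_of_mem (mem_univ i), card_univ, Fintype.card_fin]
  norm_num [Nat.sub_sub]

open Finset in
lemma secondMoment_diag {d : ℕ} (hd : 2 ≤ d) (i : Fin d) :
    secondMoment d i i = 1/2 := by
  have hQ : shapQ d ≠ 0 := ne_of_gt (shapQ_pos hd)
  have hd0 : (d:ℝ) ≠ 0 := by positivity
  have hH : harm (d-1) ≠ 0 := ne_of_gt (harm_pos (by omega))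
  set c : ℝ := ((d:ℝ)-1)/(shapQ d * d) with hc
  have key : secondMoment d i i
      = ∑ k ∈ range (d+1), (if k ∈ Icc 1 (d-1) then c * (1/((d:ℝ)-k)) else 0) := by
    rw [secondMoment, show (univ : Finset (Finset (Fin d))) = (univ : Finset (Fin d)).powerset
      from (Finset.powerset_univ).symm, Finset.sum_powerset, card_univ, Fintype.card_fin]
    apply Finset.sum_congr rfl
    intro k hk
    rw [Finset.mem_range] at hk
    have step1 : ∀ s ∈ powersetCard k (univ : Finset (Fin d)),
        pSh d s * (if i ∈ s then (1:ℝ) else 0) * (if i ∈ s then (1:ℝ) else 0)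
        = if i ∈ s then pSh d s else 0 := by
      intro s _; by_cases h : i ∈ s <;> simp [h]
    rw [Finset.sum_congr rfl step1, ← Finset.sum_filter]
    have step2 : ∀ s ∈ (powersetCard k (univ : Finset (Fin d))).filter (fun s => i ∈ s),
        pSh d s = if 0 < k ∧ k < d then
          (((d : ℝ) - 1) /
            ((Nat.choose d k : ℝ) * (k : ℝ) * ((d : ℝ) - (k : ℝ)))) / shapQ d else 0 := by
      intro s hs
      simp only [mem_filter, mem_powersetCard] at hs
      rw [pSh, hs.1.2]
    rw [Finset.sum_congr rfl step2, Finset.sum_const, nsmul_eq_mul]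
    by_cases h : 1 ≤ k ∧ k ≤ d - 1
    · rw [aux_count1 i k h.1, if_pos (by omega : 0 < k ∧ k < d),
        if_pos (Finset.mem_Icc.mpr h)]
      have hk0 : (k:ℝ) ≠ 0 := by
        have : 0 < k := h.1; positivity
      have hdk : (d:ℝ) - k ≠ 0 := by
        have : k < d := by omega
        have : (k:ℝ) < d := by exact_mod_cast this
        linarith
      have hch : (0:ℝ) < (d.choose k : ℝ) := by
        exact_mod_cast Nat.choose_pos (by omega : k ≤ d)
      have hnat : d * ((d-1).choose (k-1)) = d.choose k * k := by
        have := Nat.add_one_mul_choose_eq (d-1) (k-1)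
        have e1 : d-1+1 = d := by omega
        have e2 : k-1+1 = k := by omega
        rwa [e1, e2] at this
      have hcast : (d:ℝ) * ((d-1).choose (k-1) : ℝ) = (d.choose k : ℝ) * k := by
        exact_mod_cast congrArg (Nat.cast : ℕ → ℝ) hnat
      have hrep : ((d-1).choose (k-1) : ℝ) = (d.choose k : ℝ) * k / d := by
        field_simp
        linarith [hcast]
      rw [hrep, hc]
      field_simp
    · rw [if_neg (by omega : ¬(0 < k ∧ k < d)), if_neg (fun hm => h (Finset.mem_Icc.mp hm))]
      ring
  have hd1 : ((d:ℝ)-1) ≠ 0 := by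
    have : (2:ℝ) ≤ d := by exact_mod_cast hd
    intro h; linarith
  rw [key, Finset.sum_ite_mem,
    Finset.inter_eq_right.mpr (fun x hx => Finset.mem_range.mpr (by
      have := Finset.mem_Icc.mp hx; omega)),
    ← Finset.mul_sum, sum_reflect (by omega : 1 ≤ d), hc, shapQ_eq hd]
  field_simp

open Finset in
lemma aux_count2_one {d : ℕ} {i j : Fin d} (hij : i ≠ j) :
    ((Finset.powersetCard 1 (univ : Finset (Fin d))).filter (fun s => i ∈ s ∧ j ∈ s)) = ∅ := by
  rw [Finset.filter_eq_empty_iff]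
  intro s hs
  rw [Finset.mem_powersetCard] at hs
  rintro ⟨hi, hj⟩
  have hsub : ({i, j} : Finset (Fin d)) ⊆ s := by
    intro x hx
    rcases Finset.mem_insert.mp hx with h | h
    · rwa [h]
    · rw [Finset.mem_singleton.mp h]; exact hj
  have := Finset.card_le_card hsub
  rw [Finset.card_insert_of_notMem (by simp [hij]), Finset.card_singleton, hs.2] at this
  omega

open Finset in
lemma secondMoment_offdiag {d : ℕ} (hd : 2 ≤ d) {i j : Fin d} (hij : i ≠ j) :
    secondMoment d i j = (harm (d-1) - 1) / (2 * harm (d-1)) := by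
  have hQ : shapQ d ≠ 0 := ne_of_gt (shapQ_pos hd)
  have hd0 : (d:ℝ) ≠ 0 := by positivity
  have hH : harm (d-1) ≠ 0 := ne_of_gt (harm_pos (by omega))
  have hd1 : ((d:ℝ)-1) ≠ 0 := by
    have : (2:ℝ) ≤ d := by exact_mod_cast hd
    intro h; linarith
  set c : ℝ := 1/(shapQ d * d) with hc
  have key : secondMoment d i j
      = ∑ k ∈ range (d+1), (if k ∈ Icc 1 (d-1) then c * (((k:ℝ)-1)/((d:ℝ)-k)) else 0) := by
    rw [secondMoment, show (univ : Finset (Finset (Fin d))) = (univ : Finset (Fin d)).powerset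
      from (Finset.powerset_univ).symm, Finset.sum_powerset, card_univ, Fintype.card_fin]
    apply Finset.sum_congr rfl
    intro k hk
    rw [Finset.mem_range] at hk
    have step1 : ∀ s ∈ powersetCard k (univ : Finset (Fin d)),
        pSh d s * (if i ∈ s then (1:ℝ) else 0) * (if j ∈ s then (1:ℝ) else 0)
        = if i ∈ s ∧ j ∈ s then pSh d s else 0 := by
      intro s _
      by_cases h1 : i ∈ s <;> by_cases h2 : j ∈ s <;> simp [h1, h2]
    rw [Finset.sum_congr rfl step1, ← Finset.sum_filter]
    have step2 : ∀ s ∈ (powersetCard k (univ : Finset (Fin d))).filter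
          (fun s => i ∈ s ∧ j ∈ s),
        pSh d s = if 0 < k ∧ k < d then
          (((d : ℝ) - 1) /
            ((Nat.choose d k : ℝ) * (k : ℝ) * ((d : ℝ) - (k : ℝ)))) / shapQ d else 0 := by
      intro s hs
      simp only [mem_filter, mem_powersetCard] at hs
      rw [pSh, hs.1.2]
    rw [Finset.sum_congr rfl step2, Finset.sum_const, nsmul_eq_mul]
    by_cases h : 2 ≤ k ∧ k ≤ d - 1
    · rw [aux_count2 hij k h.1, if_pos (by omega : 0 < k ∧ k < d),
        if_pos (Finset.mem_Icc.mpr ⟨by omega, h.2⟩)]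
      have hk0 : (k:ℝ) ≠ 0 := by
        have : 0 < k := by omega
        positivity
      have hk1 : ((k:ℝ)-1) ≠ 0 := by
        have : (2:ℝ) ≤ k := by exact_mod_cast h.1
        intro hh; linarith
      have hdk : (d:ℝ) - k ≠ 0 := by
        have : k < d := by omega
        have : (k:ℝ) < d := by exact_mod_cast this
        linarith
      have hch : (0:ℝ) < (d.choose k : ℝ) := by
        exact_mod_cast Nat.choose_pos (by omega : k ≤ d)
      have hnat1 : d * ((d-1).choose (k-1)) = d.choose k * k := by
        have := Nat.add_one_mul_choose_eq (d-1) (k-1)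
        have e1 : d-1+1 = d := by omega
        have e2 : k-1+1 = k := by omega
        rwa [e1, e2] at this
      have hnat2 : (d-1) * ((d-2).choose (k-2)) = (d-1).choose (k-1) * (k-1) := by
        have := Nat.add_one_mul_choose_eq (d-2) (k-2)
        have e1 : d-2+1 = d-1 := by omega
        have e2 : k-2+1 = k-1 := by omega
        rwa [e1, e2] at this
      have hnat : d * ((d-1) * ((d-2).choose (k-2))) = d.choose k * k * (k-1) := by
        rw [hnat2, ← Nat.mul_assoc, hnat1]
      have hcast : (d:ℝ) * (((d:ℝ)-1) * ((d-2).choose (k-2) : ℝ))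
          = (d.choose k : ℝ) * k * ((k:ℝ)-1) := by
        have := congrArg (Nat.cast : ℕ → ℝ) hnat
        push_cast at this
        have e1 : ((d:ℝ) - 1) = ((d-1 : ℕ) : ℝ) := by
          have : 1 ≤ d := by omega
          push_cast [this]; ring
        have e2 : ((k:ℝ) - 1) = ((k-1 : ℕ) : ℝ) := by
          have : 1 ≤ k := by omega
          push_cast [this]; ring
        rw [e1, e2]
        exact_mod_cast hnat
      have hrep : (((d-2).choose (k-2)) : ℝ)
          = (d.choose k : ℝ) * k * ((k:ℝ)-1) / ((d:ℝ) * ((d:ℝ)-1)) := by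
        field_simp
        linarith [hcast]
      rw [hrep, hc]
      field_simp
    · by_cases h1 : k = 1
      · subst h1
        rw [aux_count2_one hij]
        rw [if_pos (by omega : 0 < 1 ∧ 1 < d)]
        simp
      · rw [if_neg (by omega : ¬(0 < k ∧ k < d)),
          if_neg (fun hm => by have := Finset.mem_Icc.mp hm; omega)]
        ring
  rw [key, Finset.sum_ite_mem,
    Finset.inter_eq_right.mpr (fun x hx => Finset.mem_range.mpr (by
      have := Finset.mem_Icc.mp hx; omega))]
  have hterm : ∀ k ∈ Icc 1 (d-1),
      c * (((k:ℝ)-1)/((d:ℝ)-k)) = c * (((d:ℝ)-1) * (1/((d:ℝ)-k))) - c := by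
    intro k hk
    rw [Finset.mem_Icc] at hk
    have hdk : (d:ℝ) - k ≠ 0 := by
      have : k < d := by omega
      have : (k:ℝ) < d := by exact_mod_cast this
      linarith
    field_simp
    ring
  rw [Finset.sum_congr rfl hterm, Finset.sum_sub_distrib, ← Finset.mul_sum, ← Finset.mul_sum,
    sum_reflect (by omega : 1 ≤ d), Finset.sum_const, Nat.card_Icc, nsmul_eq_mul, hc,
    shapQ_eq hd]
  have hcard : ((d - 1 + 1 - 1 : ℕ) : ℝ) = (d:ℝ) - 1 := by
    have : 1 ≤ d := by omega
    push_cast [this]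
    ring
  rw [hcard]
  field_simp

lemma quadform_eq {d : ℕ} (hd : 2 ≤ d) (φ : EuclideanSpace ℝ (Fin d)) :
    ∑ i, ∑ j, φ i * secondMoment d i j * φ j
      = (harm (d-1) - 1) / (2 * harm (d-1)) * (∑ i, φ i)^2
        + (1 / (2 * harm (d-1))) * ∑ i, (φ i)^2 := by
  have hH : harm (d-1) ≠ 0 := ne_of_gt (harm_pos (by omega))
  set b : ℝ := (harm (d-1) - 1) / (2 * harm (d-1)) with hb
  have hab : (1:ℝ)/2 - b = 1 / (2 * harm (d-1)) := by
    rw [hb]; field_simp; ring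
  have hentry : ∀ i j : Fin d,
      secondMoment d i j = b + (if i = j then (1:ℝ)/2 - b else 0) := by
    intro i j
    by_cases h : i = j
    · subst h; rw [secondMoment_diag hd, if_pos rfl]; ring
    · rw [secondMoment_offdiag hd h, if_neg h]; ring
  have hrow : ∀ i : Fin d,
      ∑ j, φ i * secondMoment d i j * φ j
        = φ i * b * (∑ j, φ j) + ((1:ℝ)/2 - b) * (φ i)^2 := by
    intro i
    have : ∀ j : Fin d, φ i * secondMoment d i j * φ j
        = φ i * b * φ j + (if i = j then ((1:ℝ)/2 - b) * (φ i)^2 else 0) := by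
      intro j
      rw [hentry i j]
      by_cases h : i = j
      · subst h; rw [if_pos rfl, if_pos rfl]; ring
      · rw [if_neg h, if_neg h]; ring
    rw [Finset.sum_congr rfl (fun j _ => this j), Finset.sum_add_distrib, ← Finset.mul_sum,
      Finset.sum_ite_eq]
    simp
  rw [Finset.sum_congr rfl (fun i _ => hrow i), Finset.sum_add_distrib, ← Finset.sum_mul,
    ← Finset.mul_sum, ← Finset.sum_mul, hab]
  ring

lemma norm_sq_eq {d : ℕ} (φ : EuclideanSpace ℝ (Fin d)) :
    ‖φ‖^2 = ∑ i, (φ i)^2 := by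
  rw [EuclideanSpace.norm_eq, Real.sq_sqrt (by positivity)]
  congr 1
  ext i
  rw [Real.norm_eq_abs, sq_abs]

/-- The minimum eigenvalue of the second-moment matrix `A = E[s sᵀ]` of the Shapley
kernel equals `1/(2 H_{d-1})`: the quadratic form satisfies
`φᵀAφ ≥ ‖φ‖²/(2 H_{d-1})` for all `φ`, with equality attained at some nonzero `φ`. -/
theorem shapley_second_moment_min_eigenvalue (d : ℕ) (hd : 2 ≤ d) :
    (∀ φ : EuclideanSpace ℝ (Fin d),
      ‖φ‖ ^ 2 / (2 * harm (d - 1)) ≤ ∑ i, ∑ j, φ i * secondMoment d i j * φ j) ∧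
    ∃ φ : EuclideanSpace ℝ (Fin d), φ ≠ 0 ∧
      ∑ i, ∑ j, φ i * secondMoment d i j * φ j = ‖φ‖ ^ 2 / (2 * harm (d - 1)) := by
  have hH : 0 < harm (d-1) := harm_pos (by omega)
  have hH1 : 1 ≤ harm (d-1) := one_le_harm (by omega)
  have hb : 0 ≤ (harm (d-1) - 1) / (2 * harm (d-1)) := by
    apply div_nonneg <;> linarith
  constructor
  · intro φ
    rw [quadform_eq hd φ, norm_sq_eq φ, div_eq_mul_inv, ← one_div]
    have := mul_nonneg hb (sq_nonneg (∑ i, φ i))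
    have e : (∑ i, (φ i)^2) * (1/(2 * harm (d-1))) = (1/(2 * harm (d-1))) * ∑ i, (φ i)^2 := by
      ring
    rw [mul_comm]
    linarith
  · set i0 : Fin d := ⟨0, by omega⟩
    set i1 : Fin d := ⟨1, by omega⟩
    have h01 : i0 ≠ i1 := by
      simp only [i0, i1, Fin.mk.injEq, ne_eq]
      omega
    refine ⟨EuclideanSpace.single i0 1 - EuclideanSpace.single i1 1, ?_, ?_⟩
    · intro h
      have := congrFun (congrArg (fun x : EuclideanSpace ℝ (Fin d) => (x : Fin d → ℝ)) h) i0
      simp [EuclideanSpace.single_apply, h01, Ne.symm h01] at this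
    · set φ : EuclideanSpace ℝ (Fin d) := EuclideanSpace.single i0 1 - EuclideanSpace.single i1 1
      have hφ : ∀ l, φ l = (if l = i0 then (1:ℝ) else 0) - (if l = i1 then (1:ℝ) else 0) := by
        intro l
        simp [φ, EuclideanSpace.single_apply]
      have hsum : (∑ i, φ i) = 0 := by
        simp only [hφ, Finset.sum_sub_distrib]
        rw [Finset.sum_ite_eq' Finset.univ i0 (fun _ => (1:ℝ)),
          Finset.sum_ite_eq' Finset.univ i1 (fun _ => (1:ℝ))]
        simp
      rw [quadform_eq hd φ, norm_sq_eq φ, hsum]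
      ring
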